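/- A formal series θ = Σ_{h∈H} a_h e(h) satisfies the theta functional equation b*(θ) = ψ(b)(b,b)e(h_l(b))·θ·e(h_r(b))⁻¹ for all b ∈ B if and only if its coefficients satisfy, for all h ∈ H and b ∈ B, the recursion a_{h+h⁻(b)} = a_h · ψ(b) · h(b)⁻¹ · (b,b)⁻¹ · α(h_l(b),h_l(b)) · α(h_r(b),h_l(b)) · α(h_l(b)+h_r(b), h), where h⁻(b) = h_l(b) − h_r(b). -/

import Mathlib

noncomputable def lmulE {K : Type*} [Field K] {H : Type*} [AddCommGroup H]
    (α : H → H → Kˣ) (h : H) (Φ : H → K) : H → K :=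
  fun g => (α h (g - h) : K) * Φ (g - h)

noncomputable def rmulEinv {K : Type*} [Field K] {H : Type*} [AddCommGroup H]
    (α : H → H → Kˣ) (h : H) (Φ : H → K) : H → K :=
  fun g => (α h h : K) * (α (g + h) (-h) : K) * Φ (g + h)

noncomputable def jfac {K : Type*} [Field K] {H : Type*} [AddCommGroup H]
    (α : H → H → Kˣ) (hl hr : H) (c : K) (Φ : H → K) : H → K :=
  fun g => c * lmulE α hl (rmulEinv α hr Φ) g

noncomputable def bstarF {K : Type*} [Field K] {H : Type*}
    (χb : H → Kˣ) (Φ : H → K) : H → K :=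
  fun h => (χb h : K) * Φ h

/-- a formal series `θ = Σ a_h e(h)` satisfies the theta
functional equation `b*(θ) = ψ(b)(b,b)e(h_l(b))·θ·e(h_r(b))⁻¹` for all `b ∈ B`
iff its coefficients satisfy, for all `h ∈ H`, `b ∈ B`, the recursion (2.21):
`a_{h+h⁻(b)} = a_h·ψ(b)·h(b)⁻¹·(b,b)⁻¹·α(h_l(b),h_l(b))·α(h_r(b),h_l(b))·α(h_l(b)+h_r(b),h)`. -/
theorem stmt14 {K : Type*} [Field K] {H : Type*} [AddCommGroup H]
    [Module.Free ℤ H] [Module.Finite ℤ H]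
    {B : Type*} [AddCommGroup B]
    (α : H → H → Kˣ)
    (halt : ∀ h g, α h g * α g h = 1)
    (hbil₁ : ∀ h₁ h₂ g, α (h₁ + h₂) g = α h₁ g * α h₂ g)
    (hbil₂ : ∀ h g₁ g₂, α h (g₁ + g₂) = α h g₁ * α h g₂)
    (χ : B → H → Kˣ)
    (hχB : ∀ b b' h, χ (b + b') h = χ b h * χ b' h)
    (hχH : ∀ b h h', χ b (h + h') = χ b h * χ b h')
    (hl hr : B →+ H)
    (ψ : B → Kˣ) (hψ : ∀ b b', ψ (b + b') = ψ b * ψ b')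
    (pair : B → B → Kˣ)
    (hpsym : ∀ b₁ b₂, pair b₁ b₂ = pair b₂ b₁)
    (hpbil : ∀ b₁ b₂ b, pair (b₁ + b₂) b = pair b₁ b * pair b₂ b)
    (hcond : ∀ b₁ b₂ : B,
      χ b₁ (hl b₂ - hr b₂) =
        (pair b₁ b₂) ^ 2 * α (hl b₁) (hl b₂) * (α (hr b₁) (hr b₂))⁻¹)
    (θ : H → K) :
    (∀ b : B,
      bstarF (χ b) θ = jfac α (hl b) (hr b) ((ψ b : K) * (pair b b : K)) θ) ↔
    (∀ (h : H) (b : B),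
      θ (h + (hl b - hr b)) =
        θ h * (ψ b : K) * ((χ b h : K))⁻¹ * ((pair b b : K))⁻¹ *
          (α (hl b) (hl b) : K) * (α (hr b) (hl b) : K) *
          (α (hl b + hr b) h : K)) := by

  -- basic consequences of bimultiplicativity and alternation
  have h0₂ : ∀ h : H, α h 0 = 1 := by
    intro h
    have := hbil₂ h 0 0
    rw [add_zero] at this
    exact left_eq_mul.mp this
  have hneg₂ : ∀ h g : H, α h (-g) = (α h g)⁻¹ := by
    intro h g
    refine eq_inv_of_mul_eq_one_left ?_
    rw [← hbil₂]; simp [h0₂]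
  have hswap : ∀ h g : H, α g h = (α h g)⁻¹ := fun h g =>
    eq_inv_of_mul_eq_one_left (halt g h)
  have hsqK : ∀ h : H, (α h h : K) * (α h h : K) = 1 := by
    intro h
    simpa using congrArg Units.val (halt h h)
  have key : ∀ (b : B) (h : H),
      (bstarF (χ b) θ (h + (hl b - hr b)) =
        jfac α (hl b) (hr b) ((ψ b : K) * (pair b b : K)) θ (h + (hl b - hr b))) ↔
      (θ (h + (hl b - hr b)) =
        θ h * (ψ b : K) * ((χ b h : K))⁻¹ * ((pair b b : K))⁻¹ *
          (α (hl b) (hl b) : K) * (α (hr b) (hl b) : K) *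
          (α (hl b + hr b) h : K)) := by
    intro b h
    have e1 : h + (hl b - hr b) - hl b = h - hr b := by abel
    have e2 : h - hr b + hr b = h := by abel
    simp only [bstarF, jfac, lmulE, rmulEinv, e1, e2]
    rw [hχH b h (hl b - hr b), hcond b b]
    rw [show h - hr b = h + -(hr b) by abel, hbil₂, hneg₂, hneg₂,
      hbil₁ (hl b) (hr b) h, hswap h (hr b), hswap (hl b) (hr b)]
    push_cast
    constructor
    · intro A
      field_simp at A ⊢
      apply mul_left_cancel₀
        (mul_ne_zero (pair b b).ne_zero (α (hl b) (hl b)).ne_zero :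
          ((pair b b : K) * (α (hl b) (hl b) : K)) ≠ 0)
      linear_combination (pair b b : K) * A +
        ((pair b b : K) * (ψ b : K) * (α (hl b) h : K) * θ h) * hsqK (hr b) -
        ((pair b b : K) * (ψ b : K) * (α (hl b) h : K) * θ h) * hsqK (hl b)
    · intro Bq
      field_simp at Bq ⊢
      linear_combination ((α (hl b) (hl b) : K)) * Bq +
        ((ψ b : K) * (α (hl b) h : K) * θ h) * hsqK (hl b) -
        ((ψ b : K) * (α (hl b) h : K) * θ h) * hsqK (hr b)
  constructor
  · intro hA h b
    exact (key b h).mp (congrFun (hA b) (h + (hl b - hr b)))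
  · intro hB b
    funext g
    have e : g - (hl b - hr b) + (hl b - hr b) = g := by abel
    have := (key b (g - (hl b - hr b))).mpr (hB (g - (hl b - hr b)) b)
    rwa [e] at this
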